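/- Let q be a nonzero complex number with q² ≠ 1 and let z be a complex number with z ≠ 1 and z ≠ q². In the ring of 4×4 complex matrices, with rows and columns indexed by the ordered basis (v₁⊗v₁, v₁⊗v₂, v₂⊗v₁, v₂⊗v₂) and E_{kl} denoting the matrix unit with 1 in row k, column l, define: M_K := diag(q^{−2}, q^{−1}, q^{−1}, 1); M₋ := I − ((q−q^{−1})z/(1−z))·E_{32}; M₀ := diag((1−q²z)/(1−q^{−2}z), (1−z)/(1−q^{−2}z), (1−q²z)/(1−z), 1); M₊ := I − ((q−q^{−1})/(1−z))·E_{23}. Then M_K · M₋ · M₀ · M₊ = (q^{−1}z − q)^{−1} · N, where N := diag(qz − q^{−1}, z − 1, z − 1, q^{−1}z − q) + (q−q^{−1})·E_{23} + z(q−q^{−1})·E_{32}. -/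

import Mathlib

open Matrix

set_option maxHeartbeats 8000000

/-- On the ordered basis `(v₁⊗v₁, v₁⊗v₂, v₂⊗v₁, v₂⊗v₂)` of `V⊗V`, the product of
the four factors of the specialized universal `R`-matrix of `U_q(ĝl(1,1))`
equals the Perk–Schultz `R`-matrix `R(z,1)` divided by `q⁻¹z − q`. -/
theorem universal_R_specializes_to_PerkSchultz (q z : ℂ) (hq : q ≠ 0)
    (hq2 : q ^ 2 ≠ 1) (hz1 : z ≠ 1) (hzq : z ≠ q ^ 2) :
    let MK : Matrix (Fin 4) (Fin 4) ℂ := Matrix.diagonal ![(q ^ 2)⁻¹, q⁻¹, q⁻¹, 1]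
    let Mminus : Matrix (Fin 4) (Fin 4) ℂ :=
      1 - Matrix.single 2 1 ((q - q⁻¹) * z / (1 - z))
    let Mzero : Matrix (Fin 4) (Fin 4) ℂ :=
      Matrix.diagonal ![(1 - q ^ 2 * z) / (1 - (q ^ 2)⁻¹ * z),
        (1 - z) / (1 - (q ^ 2)⁻¹ * z), (1 - q ^ 2 * z) / (1 - z), 1]
    let Mplus : Matrix (Fin 4) (Fin 4) ℂ :=
      1 - Matrix.single 1 2 ((q - q⁻¹) / (1 - z))
    let N : Matrix (Fin 4) (Fin 4) ℂ :=
      Matrix.diagonal ![q * z - q⁻¹, z - 1, z - 1, q⁻¹ * z - q]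
        + Matrix.single 1 2 (q - q⁻¹)
        + Matrix.single 2 1 (z * (q - q⁻¹))
    MK * Mminus * Mzero * Mplus = (q⁻¹ * z - q)⁻¹ • N := by
  intro MK Mminus Mzero Mplus N
  have h1z : (1 : ℂ) - z ≠ 0 := sub_ne_zero.mpr (Ne.symm hz1)
  have hq2z : (1 : ℂ) - (q ^ 2)⁻¹ * z ≠ 0 := by
    have : (q ^ 2)⁻¹ * (q ^ 2 - z) ≠ 0 := by
      exact mul_ne_zero (inv_ne_zero (pow_ne_zero 2 hq)) (sub_ne_zero.mpr (Ne.symm hzq))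
    rw [mul_sub] at this
    rwa [inv_mul_cancel₀ (pow_ne_zero 2 hq)] at this
  have hqzq : q⁻¹ * z - q ≠ 0 := by
    have h : q⁻¹ * z - q = q⁻¹ * (z - q ^ 2) := by
      field_simp
    rw [h]
    exact mul_ne_zero (inv_ne_zero hq) (sub_ne_zero.mpr hzq)
  have hA : q ^ 2 - z ≠ 0 := sub_ne_zero.mpr (Ne.symm hzq)
  have hC : z - q ^ 2 ≠ 0 := sub_ne_zero.mpr hzq
  have hB : q * z - q ^ 3 ≠ 0 := by
    have : q * z - q ^ 3 = q * (z - q ^ 2) := by ring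
    rw [this]; exact mul_ne_zero hq hC
  have hD : z * q - q ^ 3 ≠ 0 := by rw [mul_comm]; exact hB
  have hz1' : z - 1 ≠ 0 := sub_ne_zero.mpr hz1
  have hE : -(z * q ^ 3) - z * q ^ 5 + z ^ 2 * q ^ 3 + q ^ 5 ≠ 0 := by
    have : -(z * q ^ 3) - z * q ^ 5 + z ^ 2 * q ^ 3 + q ^ 5 = (z - 1) * (q ^ 3 * (z - q ^ 2)) := by
      ring
    rw [this]
    exact mul_ne_zero hz1' (mul_ne_zero (pow_ne_zero 3 hq) hC)
  have hF : -(z * q ^ 3) - z * q ^ 5 * 2 + z ^ 2 * q ^ 3 * 2 + (z ^ 2 * q ^ 5 - z ^ 3 * q ^ 3) + q ^ 5 ≠ 0 := by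
    have : -(z * q ^ 3) - z * q ^ 5 * 2 + z ^ 2 * q ^ 3 * 2 + (z ^ 2 * q ^ 5 - z ^ 3 * q ^ 3) + q ^ 5
        = (z - 1) * ((z - 1) * (q ^ 3 * (q ^ 2 - z))) := by ring
    rw [this]
    exact mul_ne_zero hz1' (mul_ne_zero hz1' (mul_ne_zero (pow_ne_zero 3 hq) hA))
  have h2E := inv_mul_cancel₀ hE
  have h2F := inv_mul_cancel₀ hF
  rw [eq_comm, inv_smul_eq_iff₀ hqzq]
  ext i j
  fin_cases i <;> fin_cases j <;>
    simp [MK, Mminus, Mzero, Mplus, N, Matrix.mul_apply, Fin.sum_univ_four,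
      Matrix.single, Matrix.one_apply, Matrix.diagonal, Matrix.smul_apply] <;>
    field_simp
  all_goals first
    | ring1
    | linear_combination (z - z * q ^ 2) * h2E
    | linear_combination (z * (q ^ 2 - 1) ^ 2) * h2F
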